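/- Suppose the matrices M_1,…,M_r satisfy conditions (H0), (H1), (H2) and (H3). Fix m ∈ ℤ^r with m ≥ 0. Then there exist l ≥ 0 and a family of words (w_a)_{a ∈ A} in W_l satisfying: (1) o(w_a) = a for each a ∈ A; (2) for all a, b ∈ A and every nonzero p ∈ ℤ^r with |p| ≤ m, the words w_a and τ_p w_b do not agree on [0,l] ∩ [p, p+l]. -/

import Mathlib

open Matrix

variable {r : ℕ} {A : Type*}

/-- The `j`-th standard basis vector of `ℤ^r`. -/
def evec (r : ℕ) (j : Fin r) : Fin r → ℤ := fun i => if i = j then 1 else 0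

/-- `w` represents a word of shape `m` (only its values on `[0,m]` matter):
`m ≥ 0` and the transition matrices are respected on the box `[0,m]`. -/
def IsWord (M : Fin r → Matrix A A ℤ) (m : Fin r → ℤ) (w : (Fin r → ℤ) → A) : Prop :=
  0 ≤ m ∧ ∀ (l : Fin r → ℤ) (j : Fin r), 0 ≤ l → l + evec r j ≤ m →
    M j (w (l + evec r j)) (w l) = 1

/-- Two representing functions agree on the box `[0,m]`; this is equality of
words of shape `m`. -/
def AgreeOn (m : Fin r → ℤ) (w w' : (Fin r → ℤ) → A) : Prop :=
  ∀ l : Fin r → ℤ, 0 ≤ l → l ≤ m → w l = w' l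

/-- The restriction `w|[k,k+n]`, as a word based at `0`: `(restrictW k w) i = w (i + k)`. -/
def restrictW (k : Fin r → ℤ) (w : (Fin r → ℤ) → A) : (Fin r → ℤ) → A :=
  fun i => w (i + k)

/-- `w` (a word of shape `m`) is `p`-periodic: the translate `τ_p w`, given by
`(τ_p w)(x) = w (x - p)`, agrees with `w` on `[0,m] ∩ [p,p+m]`. -/
def IsPeriodic (p m : Fin r → ℤ) (w : (Fin r → ℤ) → A) : Prop :=
  ∀ x : Fin r → ℤ, 0 ≤ x → x ≤ m → p ≤ x → x ≤ p + m → w (x - p) = w x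

/-- Condition (H0): each `M j` is nonzero. -/
def H0 (M : Fin r → Matrix A A ℤ) : Prop := ∀ j, M j ≠ 0

/-- Condition (H1): unique products of words. -/
def H1 (M : Fin r → Matrix A A ℤ) : Prop :=
  ∀ (m n : Fin r → ℤ) (u v : (Fin r → ℤ) → A),
    IsWord M m u → IsWord M n v → u m = v 0 →
      (∃ w, IsWord M (m + n) w ∧ AgreeOn m w u ∧ AgreeOn n (restrictW m w) v) ∧
      (∀ w w', IsWord M (m + n) w → AgreeOn m w u → AgreeOn n (restrictW m w) v →
        IsWord M (m + n) w' → AgreeOn m w' u → AgreeOn n (restrictW m w') v →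
        AgreeOn (m + n) w w')

/-- Condition (H2): the directed graph on `A` with an edge `a → b` whenever
`M i b a = 1` for some `i` is irreducible. -/
def H2 (M : Fin r → Matrix A A ℤ) : Prop :=
  ∀ a b : A, Relation.ReflTransGen (fun x y => ∃ i, M i y x = 1) a b

/-- Condition (H3): for each nonzero `p ∈ ℤ^r` there is a non-`p`-periodic word. -/
def H3 (M : Fin r → Matrix A A ℤ) : Prop :=
  ∀ p : Fin r → ℤ, p ≠ 0 → ∃ (m : Fin r → ℤ) (w : (Fin r → ℤ) → A),
    IsWord M m w ∧ ¬ IsPeriodic p m w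

/-- Condition (H1a): the matrices commute. -/
def H1a [Fintype A] (M : Fin r → Matrix A A ℤ) : Prop :=
  ∀ i j, M i * M j = M j * M i

/-- Condition (H1b): for `i < j`, the entries of `M i * M j` lie in `{0,1}`. -/
def H1b [Fintype A] (M : Fin r → Matrix A A ℤ) : Prop :=
  ∀ i j, i < j → ∀ a b : A, (M i * M j) b a = 0 ∨ (M i * M j) b a = 1

/-- Condition (H1c): for `i < j < k`, the entries of `M i * M j * M k` lie in `{0,1}`. -/
def H1c [Fintype A] (M : Fin r → Matrix A A ℤ) : Prop :=
  ∀ i j k, i < j → j < k → ∀ a b : A,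
    (M i * M j * M k) b a = 0 ∨ (M i * M j * M k) b a = 1

/-- Condition (H3*). -/
def H3star (M : Fin r → Matrix A A ℤ) : Prop :=
  ∀ (j : Fin r) (m : Fin r → ℤ), m j = 0 → ∀ w : (Fin r → ℤ) → A, IsWord M m w →
    ∃ u u', IsWord M (m + evec r j) u ∧ IsWord M (m + evec r j) u' ∧
      AgreeOn m u w ∧ AgreeOn m u' w ∧ u (evec r j) ≠ u' (evec r j)

/-- `x` represents the product word `uv` of `u ∈ W_m` and `v ∈ W_n`. -/
def IsProd (M : Fin r → Matrix A A ℤ) (m n : Fin r → ℤ)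
    (u v x : (Fin r → ℤ) → A) : Prop :=
  IsWord M (m + n) x ∧ AgreeOn m x u ∧ AgreeOn n (restrictW m x) v

section AuxLemmas

variable {M : Fin r → Matrix A A ℤ}

lemma evec_nonneg (j : Fin r) : (0 : Fin r → ℤ) ≤ evec r j := by
  intro i; by_cases h : i = j <;> simp [evec, h]

lemma isWord_zero (w : (Fin r → ℤ) → A) : IsWord M 0 w := by
  refine ⟨le_refl _, fun l j hl hle => absurd (hle j) ?_⟩
  have h := hl j
  simp only [Pi.zero_apply] at h
  have he : evec r j j = 1 := by simp [evec]
  simp only [Pi.add_apply, Pi.zero_apply]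
  rw [he]
  omega

lemma prodW (h1 : H1 M) {m n : Fin r → ℤ} {u v : (Fin r → ℤ) → A}
    (hu : IsWord M m u) (hv : IsWord M n v) (h : u m = v 0) :
    ∃ w, IsWord M (m + n) w ∧ (∀ x, 0 ≤ x → x ≤ m → w x = u x)
      ∧ (∀ y, 0 ≤ y → y ≤ n → w (m + y) = v y) := by
  obtain ⟨w, hw, ha, hb⟩ := (h1 m n u v hu hv h).1
  refine ⟨w, hw, fun x h0 hx => ha x h0 hx, fun y h0 hy => ?_⟩
  have := hb y h0 hy
  simpa [restrictW, add_comm] using this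

def ConnW (M : Fin r → Matrix A A ℤ) (nn : Fin r → ℤ) (a b : A) : Prop :=
  ∃ w, IsWord M nn w ∧ w 0 = a ∧ w nn = b

lemma conn_refl (a : A) : ConnW M 0 a a := ⟨fun _ => a, isWord_zero _, rfl, rfl⟩

lemma conn_trans (h1 : H1 M) {m n : Fin r → ℤ} {a b c' : A}
    (h : ConnW M m a b) (h' : ConnW M n b c') : ConnW M (m + n) a c' := by
  obtain ⟨u, hu, hu0, hum⟩ := h
  obtain ⟨v, hv, hv0, hvn⟩ := h'
  obtain ⟨w, hw, hwa, hwb⟩ := prodW h1 hu hv (hum.trans hv0.symm)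
  exact ⟨w, hw, by rw [hwa 0 le_rfl hu.1, hu0], by rw [hwb n hv.1 le_rfl, hvn]⟩

lemma conn_step {j : Fin r} {a b : A} (hab : M j b a = 1) :
    ConnW M (evec r j) a b := by
  classical
  refine ⟨fun i => if i = 0 then a else b, ⟨evec_nonneg j, ?_⟩, if_pos rfl, ?_⟩
  · intro l j' hl hle
    have hj' : j' = j := by
      by_contra hne
      have h2 := hle j'
      have h3 := hl j'
      have ha : evec r j' j' = 1 := by simp [evec]
      have hb : evec r j j' = 0 := by simp [evec, hne]
      simp only [Pi.add_apply, Pi.zero_apply] at h2 h3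
      rw [ha, hb] at h2
      omega
    subst hj'
    have hl0 : l = 0 := by
      funext i
      have h2 := hle i
      have h3 := hl i
      simp only [Pi.add_apply, Pi.zero_apply] at h2 h3 ⊢
      omega
    subst hl0
    have hne' : evec r j' ≠ 0 := by
      intro h
      have := congrFun h j'
      simp [evec] at this
    simpa [hne'] using hab
  · have hne : evec r j ≠ 0 := by
      intro h
      have := congrFun h j
      simp [evec] at this
    simp [hne]

lemma conn_of_rtg (h1 : H1 M) {a b : A}
    (h : Relation.ReflTransGen (fun x y => ∃ i, M i y x = 1) a b) :
    ∃ nn, 0 ≤ nn ∧ ConnW M nn a b := by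
  induction h with
  | refl => exact ⟨0, le_rfl, conn_refl a⟩
  | tail hab e ih =>
    obtain ⟨nn, h0, hc⟩ := ih
    obtain ⟨i, hi⟩ := e
    exact ⟨nn + evec r i, add_nonneg h0 (evec_nonneg i),
      conn_trans h1 hc (conn_step hi)⟩

lemma entry_one (hM : ∀ j (a b : A), M j b a = 0 ∨ M j b a = 1) (h0 : H0 M)
    (j : Fin r) : ∃ y x : A, M j y x = 1 := by
  by_contra h
  apply h0 j
  ext y x
  rcases hM j x y with h' | h'
  · simpa using h'
  · exact absurd ⟨y, x, h'⟩ h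

lemma succ_exists (hM : ∀ j (a b : A), M j b a = 0 ∨ M j b a = 1)
    (h0 : H0 M) (h1 : H1 M) (h2 : H2 M) (f : A) (j : Fin r) :
    ∃ g, M j g f = 1 := by
  obtain ⟨y, x, hyx⟩ := entry_one hM h0 j
  obtain ⟨nn, hnn, hc⟩ := conn_of_rtg h1 (h2 f x)
  obtain ⟨w, hw, hw0, _⟩ := conn_trans h1 hc (conn_step hyx)
  refine ⟨w (0 + evec r j), ?_⟩
  have := hw.2 0 j le_rfl (by
    have : (0 : Fin r → ℤ) + evec r j ≤ nn + evec r j := add_le_add_left hnn _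
    exact this)
  rwa [hw0] at this

lemma word_any_shape (hM : ∀ j (a b : A), M j b a = 0 ∨ M j b a = 1)
    (h0 : H0 M) (h1 : H1 M) (h2 : H2 M) [Fintype A] :
    ∀ (N : ℕ) (nn : Fin r → ℤ), 0 ≤ nn → (∑ i, nn i).toNat = N →
      ∀ f : A, ∃ w, IsWord M nn w ∧ w 0 = f := by
  intro N
  induction N using Nat.strong_induction_on with
  | _ N ih =>
    intro nn h0n hsum f
    by_cases hz : nn = 0
    · subst hz; exact ⟨fun _ => f, isWord_zero _, rfl⟩
    · have hj : ∃ j, 0 < nn j := by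
        by_contra h
        push_neg at h
        exact hz (funext fun i => le_antisymm (h i) (h0n i))
      obtain ⟨j, hj⟩ := hj
      have h0n' : 0 ≤ nn - evec r j := by
        intro i
        have h := h0n i
        simp only [Pi.zero_apply] at h
        simp only [Pi.zero_apply, Pi.sub_apply]
        by_cases hij : i = j
        · rw [hij]
          have he : evec r j j = 1 := by simp [evec]
          rw [he]; omega
        · have he : evec r j i = 0 := by simp [evec, hij]
          rw [he]; omega
      have hS1 : 1 ≤ ∑ i, nn i := by
        have h := Finset.single_le_sum (f := fun i => nn i) (fun i _ => h0n i)
          (Finset.mem_univ j)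
        omega
      have hsumE : ∑ i, evec r j i = 1 := by simp [evec]
      have hsub : ∑ i, (nn - evec r j) i = (∑ i, nn i) - 1 := by
        simp only [Pi.sub_apply]
        rw [Finset.sum_sub_distrib, hsumE]
      have hlt : (∑ i, (nn - evec r j) i).toNat < N := by omega
      obtain ⟨w', hw', hw0'⟩ := ih _ hlt (nn - evec r j) h0n' rfl f
      obtain ⟨g, hg⟩ := succ_exists hM h0 h1 h2 (w' (nn - evec r j)) j
      obtain ⟨cu, hcu, hcu0, _⟩ := conn_step (M := M) hg
      obtain ⟨w, hw, hwa, _⟩ := prodW h1 hw' hcu hcu0.symm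
      have hsh : nn - evec r j + evec r j = nn := by ring
      rw [hsh] at hw
      exact ⟨w, hw, by rw [hwa 0 le_rfl hw'.1, hw0']⟩

lemma conn_pow (h1 : H1 M) {D : Fin r → ℤ} {c : A} (hc : ConnW M D c c) :
    ∀ t : ℕ, ConnW M (t • D) c c := by
  intro t
  induction t with
  | zero => simpa using conn_refl c
  | succ t iht => rw [succ_nsmul]; exact conn_trans h1 iht hc

end AuxLemmas

section Core

variable {M : Fin r → Matrix A A ℤ}

lemma core_exists (h1 : H1 M) (h2 : H2 M) (h3 : H3 M) (c : A)
    (L : List (Fin r → ℤ)) :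
    ∃ (s : Fin r → ℤ) (v : (Fin r → ℤ) → A),
      IsWord M s v ∧ v 0 = c ∧
      ∀ p ∈ L, p ≠ 0 → ∃ x, 0 ≤ x ∧ x ≤ s ∧ p ≤ x ∧ x ≤ p + s ∧
        v (x - p) ≠ v x := by
  induction L with
  | nil => exact ⟨0, fun _ => c, isWord_zero _, rfl, by simp⟩
  | cons p L ihL =>
    obtain ⟨s, v, hv, hv0, hwit⟩ := ihL
    have hs0 : 0 ≤ s := hv.1
    by_cases hp : p = 0
    · refine ⟨s, v, hv, hv0, fun p' hp' hne => ?_⟩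
      rcases List.mem_cons.mp hp' with h | h
      · exact absurd (h.trans hp) hne
      · exact hwit p' h hne
    · obtain ⟨sp, u, hu, hnper⟩ := h3 p hp
      have hsp0 : 0 ≤ sp := hu.1
      rw [IsPeriodic] at hnper
      push_neg at hnper
      obtain ⟨xu, hxu0, hxus, hxup, hxups, hxune⟩ := hnper
      obtain ⟨g, hg0, hgc⟩ := conn_of_rtg h1 (h2 (v s) (u 0))
      obtain ⟨cw, hcw, hcw0, hcwg⟩ := hgc
      obtain ⟨w1, hw1, hw1a, hw1b⟩ := prodW h1 hv hcw hcw0.symm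
      have hend : w1 (s + g) = u 0 := by rw [hw1b g hcw.1 le_rfl, hcwg]
      obtain ⟨w2, hw2, hw2a, hw2b⟩ := prodW h1 hw1 hu hend
      refine ⟨s + g + sp, w2, hw2, ?_, ?_⟩
      · rw [hw2a 0 le_rfl hw1.1, hw1a 0 le_rfl hs0, hv0]
      · intro p' hp' hne
        rcases List.mem_cons.mp hp' with h | h
        · -- new witness, for p' = p
          subst h
          refine ⟨s + g + xu, ?_, ?_, ?_, ?_, ?_⟩
          · exact fun i => by
              have := hs0 i; have := hg0 i; have := hxu0 i
              simp only [Pi.add_apply, Pi.zero_apply] at *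
              omega
          · exact fun i => by
              have := hxus i
              simp only [Pi.add_apply] at *
              omega
          · exact fun i => by
              have := hs0 i; have := hg0 i; have := hxup i
              simp only [Pi.add_apply, Pi.zero_apply] at *
              omega
          · exact fun i => by
              have := hxups i
              simp only [Pi.add_apply] at *
              omega
          · have e1 : w2 (s + g + xu) = u xu := hw2b xu hxu0 hxus
            have e2 : w2 (s + g + xu - p') = u (xu - p') := by
              have hxy : s + g + xu - p' = s + g + (xu - p') := by ring
              rw [hxy]
              exact hw2b (xu - p')
                (fun i => by
                  have h5 : p' i ≤ xu i := hxup i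
                  simp only [Pi.sub_apply, Pi.zero_apply]
                  omega)
                (fun i => by have := hxups i; simp only [Pi.sub_apply, Pi.add_apply] at *; omega)
            rw [e1, e2]
            exact hxune
        · -- old witness persists
          obtain ⟨x, h1x, h2x, h3x, h4x, hnex⟩ := hwit p' h hne
          refine ⟨x, h1x, ?_, h3x, ?_, ?_⟩
          · exact fun i => by
              have := h2x i; have := hg0 i; have := hsp0 i
              simp only [Pi.add_apply, Pi.zero_apply] at *
              omega
          · exact fun i => by
              have := h4x i; have := hg0 i; have := hsp0 i
              simp only [Pi.add_apply, Pi.zero_apply] at *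
              omega
          · have hxsg : x ≤ s + g := fun i => by
              have := h2x i; have := hg0 i
              simp only [Pi.add_apply, Pi.zero_apply] at *
              omega
            have e1 : w2 x = v x := by
              rw [hw2a x h1x hxsg, hw1a x h1x h2x]
            have e2 : w2 (x - p') = v (x - p') := by
              have hxp0 : (0 : Fin r → ℤ) ≤ x - p' := fun i => by
                have h5 : p' i ≤ x i := h3x i
                simp only [Pi.sub_apply, Pi.zero_apply]
                omega
              have hxps : x - p' ≤ s := fun i => by
                have := h4x i
                simp only [Pi.sub_apply, Pi.add_apply] at *; omega
              have hxpsg : x - p' ≤ s + g := fun i => by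
                have := hxps i; have := hg0 i
                simp only [Pi.add_apply, Pi.sub_apply, Pi.zero_apply] at *
                omega
              rw [hw2a (x - p') hxp0 hxpsg, hw1a (x - p') hxp0 hxps]
            rw [e1, e2]
            exact hnex

end Core


/-- under (H0)-(H3), for any `m ≥ 0` there are `l ≥ 0` and words
`w_a ∈ W_l` with `o(w_a) = a`, such that for all `a, b ∈ A` and all nonzero `p`
with `|p| ≤ m`, `w_a` and `τ_p w_b` do not agree on `[0,l] ∩ [p,p+l]`. -/
theorem stmt_16 [Fintype A] [Nonempty A] (hr : 0 < r)
    (M : Fin r → Matrix A A ℤ)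
    (hM : ∀ j (a b : A), M j b a = 0 ∨ M j b a = 1)
    (h0 : H0 M) (h1 : H1 M) (h2 : H2 M) (h3 : H3 M)
    (m : Fin r → ℤ) (hm : 0 ≤ m) :
    ∃ (l : Fin r → ℤ) (ws : A → (Fin r → ℤ) → A),
      (∀ a : A, IsWord M l (ws a) ∧ ws a 0 = a) ∧
      ∀ (a b : A) (p : Fin r → ℤ), p ≠ 0 → (fun i => |p i|) ≤ m →
        ∃ x : Fin r → ℤ, 0 ≤ x ∧ x ≤ l ∧ p ≤ x ∧ x ≤ p + l ∧
          ws a x ≠ ws b (x - p) := by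
  classical
  obtain ⟨c⟩ := ‹Nonempty A›
  choose n hn0 hnc using fun a => conn_of_rtg h1 (h2 a c)
  -- a cycle at c whose shape has positive j0 coordinate
  have hj0 : ∃ j0 : Fin r, True := ⟨⟨0, hr⟩, trivial⟩
  obtain ⟨j0, -⟩ := hj0
  obtain ⟨y, x, hyx⟩ := entry_one hM h0 j0
  obtain ⟨g1, hg10, hcg1⟩ := conn_of_rtg h1 (h2 c x)
  obtain ⟨g2, hg20, hcg2⟩ := conn_of_rtg h1 (h2 y c)
  obtain ⟨D, hDdef⟩ : ∃ D : Fin r → ℤ, D = g1 + evec r j0 + g2 := ⟨_, rfl⟩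
  have hcycle : ConnW M D c c := by
    rw [hDdef]
    exact conn_trans h1 (conn_trans h1 hcg1 (conn_step hyx)) hcg2
  have hD0 : 0 ≤ D := by
    rw [hDdef]
    exact fun i => add_nonneg (add_nonneg (hg10 i) (evec_nonneg j0 i)) (hg20 i)
  have hDj : 1 ≤ D j0 := by
    have e1 : (0:ℤ) ≤ g1 j0 := hg10 j0
    have e2 : (0:ℤ) ≤ g2 j0 := hg20 j0
    have he : evec r j0 j0 = 1 := by simp [evec]
    have e3 : D j0 = g1 j0 + evec r j0 j0 + g2 j0 := by rw [hDdef]; rfl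
    rw [he] at e3
    omega
  have hAA : (Finset.univ : Finset (A × A)).Nonempty := Finset.univ_nonempty
  obtain ⟨Nmax, hNdef⟩ : ∃ N : ℤ,
      N = Finset.univ.sup' hAA (fun ab : A × A => |(n ab.1 - n ab.2) j0|) := ⟨_, rfl⟩
  have hNmax : ∀ a b : A, |(n a - n b) j0| ≤ Nmax := fun a b => by
    rw [hNdef]
    exact Finset.le_sup' (fun ab : A × A => |(n ab.1 - n ab.2) j0|) (Finset.mem_univ (a, b))
  have hN0 : 0 ≤ Nmax := le_trans (abs_nonneg _) (hNmax c c)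
  obtain ⟨K, hKdef⟩ : ∃ K : ℤ, K = Nmax + m j0 + 1 := ⟨_, rfl⟩
  have hmj0 : (0:ℤ) ≤ m j0 := hm j0
  have hK0 : 0 < K := by omega
  have hKnat : (K.toNat : ℤ) = K := Int.toNat_of_nonneg hK0.le
  obtain ⟨ι, hιdef⟩ : ∃ f : A → ℕ, f = fun a => ((Fintype.equivFin A) a : ℕ) := ⟨_, rfl⟩
  have hιinj : Function.Injective ι := by
    rw [hιdef]
    exact fun a b h => (Fintype.equivFin A).injective (Fin.val_injective h)
  obtain ⟨q, hqdef⟩ : ∃ q : A → Fin r → ℤ,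
      q = fun a => n a + (ι a * K.toNat) • D := ⟨_, rfl⟩
  have hqi : ∀ a i, q a i = n a i + (ι a : ℤ) * K * D i := by
    intro a i
    rw [hqdef]
    simp only [Pi.add_apply, Pi.smul_apply, nsmul_eq_mul, Pi.mul_apply,
      Pi.natCast_apply, Nat.cast_mul, hKnat]
  have hq0 : ∀ a, 0 ≤ q a := by
    intro a i
    have e1 : (0:ℤ) ≤ n a i := hn0 a i
    show (0:ℤ) ≤ q a i
    rw [hqi a i]
    have : (0:ℤ) ≤ (ι a : ℤ) * K * D i :=
      mul_nonneg (mul_nonneg (Int.natCast_nonneg _) hK0.le) (hD0 i)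
    omega
  have hqc : ∀ a, ConnW M (q a) a c := fun a => by
    rw [hqdef]
    exact conn_trans h1 (hnc a) (conn_pow h1 hcycle _)
  -- separation of the q's
  have hsep : ∀ a b : A, a ≠ b → m j0 < |(q a - q b) j0| := by
    intro a b hab
    have hιne : (ι a : ℤ) ≠ (ι b : ℤ) := by
      intro h
      exact hab (hιinj (Nat.cast_injective h))
    have habs : 1 ≤ |(ι a : ℤ) - (ι b : ℤ)| :=
      Int.one_le_abs (sub_ne_zero.mpr hιne)
    have hqdiff : (q a - q b) j0 = (n a - n b) j0 + ((ι a : ℤ) - ι b) * K * D j0 := by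
      have e1 : (q a - q b) j0 = q a j0 - q b j0 := rfl
      have e2 : (n a - n b) j0 = n a j0 - n b j0 := rfl
      rw [e1, e2, hqi a j0, hqi b j0]
      ring
    have hKle : K ≤ |((ι a : ℤ) - ι b) * K * D j0| := by
      rw [abs_mul, abs_mul, abs_of_nonneg hK0.le,
        abs_of_nonneg (by omega : (0:ℤ) ≤ D j0)]
      have hA0 : 0 ≤ |(ι a : ℤ) - ι b| * K := mul_nonneg (abs_nonneg _) hK0.le
      calc K = 1 * K := (one_mul K).symm
        _ ≤ |(ι a : ℤ) - ι b| * K := mul_le_mul_of_nonneg_right habs hK0.le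
        _ ≤ |(ι a : ℤ) - ι b| * K * D j0 := le_mul_of_one_le_right hA0 hDj
    have htri : |((ι a : ℤ) - ι b) * K * D j0| ≤ |(q a - q b) j0| + |(n a - n b) j0| := by
      have e : ((ι a : ℤ) - ι b) * K * D j0 = (q a - q b) j0 + (-((n a - n b) j0)) := by
        rw [hqdiff]; ring
      rw [e]
      exact le_trans (abs_add_le _ _) (by rw [abs_neg])
    have hN := hNmax a b
    omega
  -- bounds and the core word
  obtain ⟨Q, hQdef⟩ : ∃ Q : Fin r → ℤ, Q = fun i =>
      Finset.univ.sup' hAA (fun ab : A × A => |(q ab.1 - q ab.2) i|) := ⟨_, rfl⟩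
  have hQ : ∀ (a b : A) (i : Fin r), |(q a - q b) i| ≤ Q i := fun a b i => by
    rw [hQdef]
    exact Finset.le_sup' (fun ab : A × A => |(q ab.1 - q ab.2) i|) (Finset.mem_univ (a, b))
  obtain ⟨B, hBdef⟩ : ∃ B : Fin r → ℤ, B = m + Q := ⟨_, rfl⟩
  obtain ⟨s, v, hv, hv0, hwit⟩ := core_exists h1 h2 h3 c (Finset.Icc (-B) B).toList
  have hs0 : 0 ≤ s := hv.1
  obtain ⟨qmax, hqmaxdef⟩ : ∃ Z : Fin r → ℤ, Z = fun i =>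
      Finset.univ.sup' Finset.univ_nonempty (fun a => q a i) := ⟨_, rfl⟩
  have hqmax : ∀ (a : A) (i : Fin r), q a i ≤ qmax i := fun a i => by
    rw [hqmaxdef]
    exact Finset.le_sup' (fun a => q a i) (Finset.mem_univ a)
  obtain ⟨l, hldef⟩ : ∃ l : Fin r → ℤ, l = qmax + s + m := ⟨_, rfl⟩
  -- words ws a
  have hws : ∀ a : A, ∃ w, IsWord M l w ∧ w 0 = a ∧
      ∀ z, 0 ≤ z → z ≤ s → w (q a + z) = v z := by
    intro a
    obtain ⟨P, hP, hP0, hPq⟩ := hqc a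
    obtain ⟨w1, hw1, hw1a, hw1b⟩ := prodW h1 hP hv (hPq.trans hv0.symm)
    have htail0 : 0 ≤ l - q a - s := by
      intro i
      have e1 : (0:ℤ) ≤ m i := hm i
      have e2 := hqmax a i
      have e3 : (l - q a - s) i = qmax i + s i + m i - q a i - s i := by rw [hldef]; rfl
      show (0:ℤ) ≤ (l - q a - s) i
      rw [e3]
      omega
    obtain ⟨T, hT, hT0⟩ := word_any_shape hM h0 h1 h2 _ (l - q a - s) htail0 rfl (v s)
    have hend : w1 (q a + s) = T 0 := by rw [hw1b s hs0 le_rfl, hT0]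
    obtain ⟨w2, hw2, hw2a, _⟩ := prodW h1 hw1 hT hend
    have hshape : q a + s + (l - q a - s) = l := by ring
    rw [hshape] at hw2
    have hqs0 : 0 ≤ q a + s := add_nonneg (hq0 a) hs0
    refine ⟨w2, hw2, ?_, ?_⟩
    · rw [hw2a 0 le_rfl hqs0, hw1a 0 le_rfl (hq0 a), hP0]
    · intro z hz0 hzs
      have hb1 : 0 ≤ q a + z := add_nonneg (hq0 a) hz0
      have hb2 : q a + z ≤ q a + s := add_le_add_right hzs _
      rw [hw2a (q a + z) hb1 hb2, hw1b z hz0 hzs]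
  choose ws hwsw hws0 hwsv using hws
  refine ⟨l, ws, fun a => ⟨hwsw a, hws0 a⟩, ?_⟩
  intro a b p hp hpm
  obtain ⟨p', hp'def⟩ : ∃ p' : Fin r → ℤ, p' = p + q b - q a := ⟨_, rfl⟩
  have hp'ne : p' ≠ 0 := by
    intro h
    rw [hp'def] at h
    have hqq : q a - q b = p := by
      funext i
      have e1 : (p + q b - q a) i = p i + q b i - q a i := rfl
      rw [h] at e1
      have e2 : (q a - q b) i = q a i - q b i := rfl
      have e3 : (0 : Fin r → ℤ) i = 0 := rfl
      rw [e3] at e1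
      rw [e2]
      omega
    by_cases hab : a = b
    · subst hab
      apply hp
      rw [← hqq]
      ring
    · have h5 := hsep a b hab
      rw [hqq] at h5
      have h6 : |p j0| ≤ m j0 := hpm j0
      omega
  have hp'mem : p' ∈ (Finset.Icc (-B) B).toList := by
    rw [Finset.mem_toList, Finset.mem_Icc]
    constructor <;> intro i
    · have e1 : |p i| ≤ m i := hpm i
      have e2 : |(q b - q a) i| ≤ Q i := hQ b a i
      have e3 : (q b - q a) i = q b i - q a i := rfl
      have e4 : p' i = p i + q b i - q a i := by rw [hp'def]; rfl
      show (-B) i ≤ p' i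
      have e5 : (-B) i = -(m i + Q i) := by rw [hBdef]; rfl
      rw [e4, e5]
      rw [e3] at e2
      rw [abs_le] at e1 e2
      omega
    · have e1 : |p i| ≤ m i := hpm i
      have e2 : |(q b - q a) i| ≤ Q i := hQ b a i
      have e3 : (q b - q a) i = q b i - q a i := rfl
      have e4 : p' i = p i + q b i - q a i := by rw [hp'def]; rfl
      show p' i ≤ B i
      have e5 : B i = m i + Q i := by rw [hBdef]; rfl
      rw [e4, e5]
      rw [e3] at e2
      rw [abs_le] at e1 e2
      omega
  obtain ⟨x0, hx00, hx0s, hx0p, hx0ps, hx0ne⟩ := hwit p' hp'mem hp'ne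
  refine ⟨q a + x0, ?_, ?_, ?_, ?_, ?_⟩
  · exact add_nonneg (hq0 a) hx00
  · intro i
    have e1 : x0 i ≤ s i := hx0s i
    have e2 := hqmax a i
    have e3 : (0:ℤ) ≤ m i := hm i
    have e4 : (q a + x0) i = q a i + x0 i := rfl
    have e5 : l i = qmax i + s i + m i := by rw [hldef]; rfl
    show (q a + x0) i ≤ l i
    rw [e4, e5]
    omega
  · intro i
    have e1 : p' i ≤ x0 i := hx0p i
    have e2 : p' i = p i + q b i - q a i := by rw [hp'def]; rfl
    have e3 : (0:ℤ) ≤ q b i := hq0 b i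
    have e4 : (q a + x0) i = q a i + x0 i := rfl
    show p i ≤ (q a + x0) i
    rw [e4]
    rw [e2] at e1
    omega
  · intro i
    have e1 : x0 i ≤ (p' + s) i := hx0ps i
    have e2 : (p' + s) i = p i + q b i - q a i + s i := by rw [hp'def]; rfl
    have e3 := hqmax b i
    have e4 : (0:ℤ) ≤ m i := hm i
    have e5 : (q a + x0) i = q a i + x0 i := rfl
    have e6 : (p + l) i = p i + (qmax i + s i + m i) := by rw [hldef]; rfl
    show (q a + x0) i ≤ (p + l) i
    rw [e5, e6]
    rw [e2] at e1
    omega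
  · have e1 : ws a (q a + x0) = v x0 := hwsv a x0 hx00 hx0s
    have e2 : ws b (q a + x0 - p) = v (x0 - p') := by
      have hxy : q a + x0 - p = q b + (x0 - p') := by
        rw [hp'def]; ring
      rw [hxy]
      refine hwsv b (x0 - p') ?_ ?_
      · intro i
        have e3 : p' i ≤ x0 i := hx0p i
        show (0:ℤ) ≤ (x0 - p') i
        have e4 : (x0 - p') i = x0 i - p' i := rfl
        rw [e4]
        omega
      · intro i
        have e3 : x0 i ≤ (p' + s) i := hx0ps i
        have e4 : (p' + s) i = p' i + s i := rfl
        have e5 : (x0 - p') i = x0 i - p' i := rfl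
        show (x0 - p') i ≤ s i
        rw [e5]
        rw [e4] at e3
        omega
    rw [e1, e2]
    exact fun h => hx0ne h.symm
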